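/- Let β > 0 and r ≥ 1 an integer with β·r > 1, let t_min > 0, τ_est ≥ 0 and D be such that t_min ≤ D − τ_est. Let Y be a Pareto(D, β) random variable and X_2, ..., X_{r+1} be Pareto(t_min, β) random variables, all mutually independent. Then E[ min(Y − τ_est, X_2, ..., X_{r+1}) ] = t_min/(β·r − 1) − t_min^{β·r}/((β·r − 1)·(D − τ_est)^{β·r − 1}) + ∫_{D−τ_est}^{∞} (D/(ω + τ_est))^β · (t_min/ω)^{β·r} dω + t_min. -/

import Mathlib

open MeasureTheory ProbabilityTheory Set

/-- A real random variable `X` is Pareto(`tmin`, `β`): `P(X > t) = (tmin/t)^β` for `t ≥ tmin`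
and `P(X > t) = 1` for `t < tmin`. -/
def IsPareto {Ω : Type*} [MeasurableSpace Ω] (μ : Measure Ω) (X : Ω → ℝ)
    (tmin β : ℝ) : Prop :=
  Measurable X ∧
    (∀ t : ℝ, tmin ≤ t → μ {ω | t < X ω} = ENNReal.ofReal ((tmin / t) ^ β)) ∧
    (∀ t : ℝ, t < tmin → μ {ω | t < X ω} = 1)

lemma pareto_ae_le {Ω : Type*} [MeasurableSpace Ω] (μ : Measure Ω) [IsProbabilityMeasure μ]
    (X : Ω → ℝ) (tmin β : ℝ) (h : IsPareto μ X tmin β) : ∀ᵐ ω ∂μ, tmin ≤ X ω := by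
  have key : ∀ t : ℝ, t < tmin → μ {ω | X ω ≤ t} = 0 := by
    intro t ht
    have hms : MeasurableSet {ω | t < X ω} := h.1 measurableSet_Ioi
    have h2 : {ω | X ω ≤ t} = {ω | t < X ω}ᶜ := by ext ω; simp [not_lt]
    rw [h2, measure_compl hms (measure_ne_top _ _), h.2.2 t ht, measure_univ, tsub_self]
  rw [ae_iff]
  have hsub : {ω | ¬ tmin ≤ X ω} ⊆ ⋃ n : ℕ, {ω | X ω ≤ tmin - 1 / (n + 1)} := by
    intro ω hω
    simp only [mem_setOf_eq, not_le] at hω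
    obtain ⟨n, hn⟩ := exists_nat_one_div_lt (sub_pos.2 hω)
    exact mem_iUnion.2 ⟨n, by simp only [mem_setOf_eq]; linarith⟩
  refine measure_mono_null hsub (measure_iUnion_null fun n => key _ ?_)
  have : 0 < 1 / ((n : ℝ) + 1) := by positivity
  linarith

/-- Eq. (restart16) in the paper's Theorem 4: with `Y` Pareto(`D`, `β`), the
residual law of the straggling original attempt, and `X 1, ..., X r` i.i.d. Pareto(`tmin`, `β`)
extra attempts, all mutually independent,
`E[min(Y − τ_est, X 1, ..., X r)] = tmin/(βr−1) − tmin^{βr}/((βr−1)(D−τ_est)^{βr−1})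
  + ∫_{D−τ_est}^∞ (D/(ω+τ_est))^β (tmin/ω)^{βr} dω + tmin`. -/
theorem expected_min_restart
    {Ω : Type*} [MeasurableSpace Ω] (μ : Measure Ω) [IsProbabilityMeasure μ]
    (r : ℕ) (hr : 1 ≤ r) (tmin β D τest : ℝ)
    (htmin : 0 < tmin) (hβ : 0 < β) (hβr : 1 < β * (r : ℝ)) (hτest : 0 ≤ τest)
    (h1 : tmin ≤ D - τest)
    (Y : Ω → ℝ) (X : Fin r → Ω → ℝ)
    (hindep : iIndepFun
      (Fin.cons Y X : Fin (r + 1) → Ω → ℝ) μ)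
    (hY : IsPareto μ Y D β)
    (hX : ∀ k, IsPareto μ (X k) tmin β) :
    ∫ ω, min (Y ω - τest) (⨅ k, X k ω) ∂μ
      = tmin / (β * (r : ℝ) - 1)
        - tmin ^ (β * (r : ℝ)) / ((β * (r : ℝ) - 1) * (D - τest) ^ (β * (r : ℝ) - 1))
        + (∫ x in Set.Ioi (D - τest), (D / (x + τest)) ^ β * (tmin / x) ^ (β * (r : ℝ)))
        + tmin := by
  haveI hne : Nonempty (Fin r) := ⟨⟨0, hr⟩⟩
  set p : ℝ := β * (r : ℝ) with hp
  set c : ℝ := D - τest with hcdef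
  have h0c : (0 : ℝ) < c := lt_of_lt_of_le htmin h1
  have hp1 : 1 < p := hβr
  have hD0 : (0 : ℝ) < D := by simp only [hcdef] at h0c; linarith
  -- measurability of Z
  have hZm : Measurable (fun ω => min (Y ω - τest) (⨅ k, X k ω)) :=
    (hY.1.sub measurable_const).min (Measurable.iInf fun k => (hX k).1)
  -- a.e. nonnegativity of Z
  have hXae : ∀ᵐ ω ∂μ, ∀ k, tmin ≤ X k ω :=
    (ae_all_iff).2 fun k => pareto_ae_le μ (X k) tmin β (hX k)
  have hYae := pareto_ae_le μ Y D β hY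
  have hZnn : 0 ≤ᵐ[μ] fun ω => min (Y ω - τest) (⨅ k, X k ω) := by
    filter_upwards [hXae, hYae] with ω hX' hY'
    have h2' : tmin ≤ ⨅ k, X k ω := le_ciInf hX'
    have : tmin ≤ min (Y ω - τest) (⨅ k, X k ω) := le_min (by simp only [hcdef] at h1 ⊢; linarith) h2'
    simp only [Pi.zero_apply]
    linarith
  -- product formula for the tail
  have hprod : ∀ t : ℝ, μ {ω | t < min (Y ω - τest) (⨅ k, X k ω)}
      = μ {ω | t + τest < Y ω} * ∏ k : Fin r, μ {ω | t < X k ω} := by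
    intro t
    set S : Fin (r + 1) → Set Ω :=
      Fin.cons {ω | t + τest < Y ω} (fun k => {ω | t < X k ω}) with hS
    have hsets : {ω | t < min (Y ω - τest) (⨅ k, X k ω)} = ⋂ i, S i := by
      ext ω
      simp only [mem_setOf_eq, lt_min_iff, mem_iInter]
      constructor
      · rintro ⟨hY1, hX1⟩ i
        refine Fin.cases ?_ ?_ i
        · simp only [hS, Fin.cons_zero, mem_setOf_eq]; linarith
        · intro k
          simp only [hS, Fin.cons_succ, mem_setOf_eq]
          exact lt_of_lt_of_le hX1 (ciInf_le ((Set.finite_range _).bddBelow) k)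
      · intro hall
        have h0 := hall 0
        have hs := fun k : Fin r => hall k.succ
        simp only [hS, Fin.cons_zero, Fin.cons_succ, mem_setOf_eq] at h0 hs
        refine ⟨by linarith, ?_⟩
        obtain ⟨k0, hk0⟩ := exists_eq_ciInf_of_finite (f := fun k => X k ω)
        rw [← hk0]; exact hs k0
    have hmeas : ∀ i, MeasurableSet[(MeasurableSpace.comap ((Fin.cons Y X : Fin (r+1) → Ω → ℝ) i)
        (inferInstance : MeasurableSpace ℝ))] (S i) := by
      intro i
      refine Fin.cases ?_ ?_ i
      · refine MeasurableSpace.measurableSet_comap.2 ⟨Ioi (t + τest), measurableSet_Ioi, ?_⟩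
        ext ω; simp [hS]
      · intro k
        refine MeasurableSpace.measurableSet_comap.2 ⟨Ioi t, measurableSet_Ioi, ?_⟩
        ext ω; simp [hS]
    rw [hsets, hindep.meas_iInter hmeas, Fin.prod_univ_succ]
    simp [hS]
  -- product of the X-tails
  have hXprod : ∀ t : ℝ, tmin ≤ t →
      ∏ k : Fin r, μ {ω | t < X k ω} = ENNReal.ofReal ((tmin / t) ^ p) := by
    intro t ht
    have ht0 : 0 < t := lt_of_lt_of_le htmin ht
    calc ∏ k : Fin r, μ {ω | t < X k ω}
        = ∏ _k : Fin r, ENNReal.ofReal ((tmin / t) ^ β) :=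
          Finset.prod_congr rfl fun k _ => (hX k).2.1 t ht
      _ = ENNReal.ofReal ((tmin / t) ^ β) ^ r := by
          rw [Finset.prod_const, Finset.card_univ, Fintype.card_fin]
      _ = ENNReal.ofReal (((tmin / t) ^ β) ^ r) :=
          (ENNReal.ofReal_pow (Real.rpow_nonneg (by positivity) _) r).symm
      _ = ENNReal.ofReal ((tmin / t) ^ p) := by
          rw [← Real.rpow_natCast ((tmin / t) ^ β) r, ← Real.rpow_mul (by positivity)]
  -- Y tail is one below c
  have hYone : ∀ t : ℝ, t ≤ c → μ {ω | t + τest < Y ω} = 1 := by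
    intro t ht
    have ht' : t + τest ≤ D := by simp only [hcdef] at ht; linarith
    rcases lt_or_eq_of_le ht' with h | h
    · exact hY.2.2 _ h
    · rw [hY.2.1 _ (le_of_eq h.symm), h, div_self hD0.ne', Real.one_rpow, ENNReal.ofReal_one]
  -- tail formulas on the three regions
  have tail1 : ∀ t ∈ Ioc (0 : ℝ) tmin,
      μ {ω | t < min (Y ω - τest) (⨅ k, X k ω)} = 1 := by
    intro t ht
    rw [hprod, hYone t (ht.2.trans h1), one_mul]
    rcases eq_or_lt_of_le ht.2 with h | h
    · rw [hXprod t (le_of_eq h.symm), ← h, div_self (ne_of_gt ht.1), Real.one_rpow,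
        ENNReal.ofReal_one]
    · rw [Finset.prod_congr rfl (fun k _ => (hX k).2.2 t h), Finset.prod_const, one_pow]
  have tail2 : ∀ t ∈ Ioc tmin c,
      μ {ω | t < min (Y ω - τest) (⨅ k, X k ω)} = ENNReal.ofReal ((tmin / t) ^ p) := by
    intro t ht
    rw [hprod, hYone t ht.2, hXprod t ht.1.le, one_mul]
  have tail3 : ∀ t ∈ Ioi c,
      μ {ω | t < min (Y ω - τest) (⨅ k, X k ω)}
        = ENNReal.ofReal ((D / (t + τest)) ^ β * (tmin / t) ^ p) := by
    intro t ht
    have htc : c < t := ht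
    have htD : D ≤ t + τest := by simp only [hcdef] at htc; linarith
    have htpos : 0 < t + τest := lt_of_lt_of_le hD0 htD
    rw [hprod, hY.2.1 _ htD, hXprod t (h1.trans htc.le),
      ← ENNReal.ofReal_mul (Real.rpow_nonneg (by positivity) _)]
  -- splitting of the domain
  have d1 : Disjoint (Ioc (0 : ℝ) tmin) (Ioc tmin c ∪ Ioi c) := by
    rw [Set.disjoint_left]
    rintro x hx1 hx2
    simp only [mem_Ioc, mem_union, mem_Ioi] at hx1 hx2
    rcases hx2 with ⟨h3, _⟩ | h3 <;> linarith [hx1.2]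
  have d2 : Disjoint (Ioc tmin c) (Ioi c) := Ioc_disjoint_Ioi le_rfl
  have hsplit : ∀ f : ℝ → ENNReal,
      ∫⁻ t in Ioi (0 : ℝ), f t = (∫⁻ t in Ioc (0 : ℝ) tmin, f t)
        + ((∫⁻ t in Ioc tmin c, f t) + ∫⁻ t in Ioi c, f t) := by
    intro f
    rw [← Ioc_union_Ioi_eq_Ioi htmin.le, ← Ioc_union_Ioi_eq_Ioi h1,
      lintegral_union (measurableSet_Ioc.union measurableSet_Ioi) d1,
      lintegral_union measurableSet_Ioi d2]
  -- piece 1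
  have piece1 : ∫⁻ t in Ioc (0 : ℝ) tmin, μ {ω | t < min (Y ω - τest) (⨅ k, X k ω)}
      = ENNReal.ofReal tmin := by
    rw [setLIntegral_congr_fun (g := fun _ => (1 : ENNReal)) measurableSet_Ioc
      (fun t ht => tail1 t ht), setLIntegral_one, Real.volume_Ioc, sub_zero]
  -- piece 2
  have hf2int : IntegrableOn (fun t : ℝ => (tmin / t) ^ p) (Ioc tmin c) := by
    have hcont : ContinuousOn (fun t : ℝ => (tmin / t) ^ p) (Icc tmin c) := by
      refine ContinuousOn.rpow_const ?_ fun x hx => Or.inr (by positivity)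
      exact continuousOn_const.div continuousOn_id fun x hx => ne_of_gt (htmin.trans_le hx.1)
    exact hcont.integrableOn_Icc.mono_set Ioc_subset_Icc_self
  set A : ℝ := tmin / (p - 1) - tmin ^ p / ((p - 1) * c ^ (p - 1)) with hA
  have hval : ∫ t in Ioc tmin c, (tmin / t) ^ p = A := by
    rw [← intervalIntegral.integral_of_le h1]
    rw [intervalIntegral.integral_congr (g := fun t : ℝ => tmin ^ p * t ^ (-p))
      (fun t ht => ?_)]
    · rw [intervalIntegral.integral_const_mul,
        integral_rpow (Or.inr ⟨by intro h; rw [neg_inj] at h; exact ne_of_gt hp1 h, by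
          rw [Set.uIcc_of_le h1]; intro h0; exact absurd h0.1 (not_le.2 htmin)⟩)]
      have hcp : (0 : ℝ) < c ^ (p - 1) := Real.rpow_pos_of_pos h0c _
      have htp : (0 : ℝ) < tmin ^ p := Real.rpow_pos_of_pos htmin _
      have e3 : c ^ (-p + 1) = (c ^ (p - 1))⁻¹ := by
        rw [show (-p + 1 : ℝ) = -(p - 1) by ring, Real.rpow_neg h0c.le]
      have e4 : tmin ^ p * tmin ^ (-p + 1) = tmin := by
        rw [← Real.rpow_add htmin, show (p + (-p + 1) : ℝ) = 1 by ring, Real.rpow_one]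
      have e4' : tmin ^ (-p + 1) = tmin / tmin ^ p := by
        rw [eq_div_iff (ne_of_gt htp), mul_comm]
        exact e4
      rw [e3, e4', hA]
      have hp1' : p - 1 ≠ 0 := by linarith
      have hnp : -p + 1 ≠ 0 := by intro h; apply hp1'; linarith
      field_simp
      ring
    · have ht0 : 0 < t := by
        rw [Set.uIcc_of_le h1] at ht; exact htmin.trans_le ht.1
      show (tmin / t) ^ p = tmin ^ p * t ^ (-p)
      rw [Real.div_rpow htmin.le ht0.le, Real.rpow_neg ht0.le, div_eq_mul_inv]
  have piece2 : ∫⁻ t in Ioc tmin c, μ {ω | t < min (Y ω - τest) (⨅ k, X k ω)}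
      = ENNReal.ofReal A := by
    rw [setLIntegral_congr_fun (g := fun t => ENNReal.ofReal ((tmin / t) ^ p)) measurableSet_Ioc
      (fun t ht => tail2 t ht),
      ← ofReal_integral_eq_lintegral_ofReal hf2int ?_, hval]
    filter_upwards [ae_restrict_mem measurableSet_Ioc] with t ht
    have : 0 < t := htmin.trans ht.1
    simp only [Pi.zero_apply]
    positivity
  -- piece 3
  have hf3cont : ContinuousOn (fun t : ℝ => (D / (t + τest)) ^ β * (tmin / t) ^ p) (Ioi c) := by
    refine ContinuousOn.mul ?_ ?_
    · refine ContinuousOn.rpow_const ?_ fun x hx => Or.inr hβ.le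
      refine continuousOn_const.div ((continuous_id.add continuous_const).continuousOn)
        fun x hx => ?_
      have : c < x := hx
      exact ne_of_gt (by linarith)
    · refine ContinuousOn.rpow_const ?_ fun x hx => Or.inr (by positivity)
      refine continuousOn_const.div continuousOn_id fun x hx => ?_
      have : c < x := hx
      exact ne_of_gt (by linarith)
  have hmaj : Integrable (fun t : ℝ => tmin ^ p * t ^ (-p)) (volume.restrict (Ioi c)) :=
    (integrableOn_Ioi_rpow_of_lt (by linarith) h0c).const_mul _
  have hf3int : IntegrableOn (fun t : ℝ => (D / (t + τest)) ^ β * (tmin / t) ^ p) (Ioi c) := by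
    refine Integrable.mono' hmaj (hf3cont.aestronglyMeasurable measurableSet_Ioi) ?_
    filter_upwards [ae_restrict_mem measurableSet_Ioi] with t ht
    have htc : c < t := ht
    have ht0 : 0 < t := h0c.trans htc
    have htτ : 0 < t + τest := by linarith
    have hb1 : (0 : ℝ) ≤ (D / (t + τest)) ^ β := Real.rpow_nonneg (by positivity) _
    have hb2 : (0 : ℝ) ≤ (tmin / t) ^ p := Real.rpow_nonneg (by positivity) _
    rw [Real.norm_of_nonneg (mul_nonneg hb1 hb2)]
    have hle1 : (D / (t + τest)) ^ β ≤ 1 := by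
      refine Real.rpow_le_one (by positivity) ((div_le_one htτ).2 ?_) hβ.le
      simp only [hcdef] at htc; linarith
    have he : (tmin / t) ^ p = tmin ^ p * t ^ (-p) := by
      rw [Real.div_rpow htmin.le ht0.le, Real.rpow_neg ht0.le, div_eq_mul_inv]
    calc (D / (t + τest)) ^ β * (tmin / t) ^ p ≤ 1 * (tmin / t) ^ p :=
          mul_le_mul_of_nonneg_right hle1 hb2
      _ = tmin ^ p * t ^ (-p) := by rw [one_mul, he]
  set B : ℝ := ∫ x in Ioi c, (D / (x + τest)) ^ β * (tmin / x) ^ p with hB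
  have piece3 : ∫⁻ t in Ioi c, μ {ω | t < min (Y ω - τest) (⨅ k, X k ω)}
      = ENNReal.ofReal B := by
    rw [setLIntegral_congr_fun
      (g := fun t => ENNReal.ofReal ((D / (t + τest)) ^ β * (tmin / t) ^ p)) measurableSet_Ioi
      (fun t ht => tail3 t ht),
      ← ofReal_integral_eq_lintegral_ofReal hf3int ?_]
    filter_upwards [ae_restrict_mem measurableSet_Ioi] with t ht
    have htc : c < t := ht
    have ht0 : 0 < t := h0c.trans htc
    have htτ : 0 < t + τest := by linarith
    simp only [Pi.zero_apply]
    exact mul_nonneg (Real.rpow_nonneg (by positivity) _) (Real.rpow_nonneg (by positivity) _)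
  -- nonnegativity of A and B
  have hA0 : 0 ≤ A := by
    rw [← hval]
    refine setIntegral_nonneg measurableSet_Ioc fun t ht => ?_
    have : 0 < t := htmin.trans ht.1
    positivity
  have hB0 : 0 ≤ B := by
    refine setIntegral_nonneg measurableSet_Ioi fun t ht => ?_
    have htc : c < t := ht
    have ht0 : 0 < t := h0c.trans htc
    have htτ : 0 < t + τest := by linarith
    exact mul_nonneg (Real.rpow_nonneg (by positivity) _) (Real.rpow_nonneg (by positivity) _)
  -- assemble
  rw [integral_eq_lintegral_of_nonneg_ae hZnn hZm.aestronglyMeasurable,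
    lintegral_eq_lintegral_meas_lt μ hZnn hZm.aemeasurable,
    hsplit, piece1, piece2, piece3,
    ← ENNReal.ofReal_add hA0 hB0, ← ENNReal.ofReal_add htmin.le (add_nonneg hA0 hB0),
    ENNReal.toReal_ofReal (by linarith)]
  rw [hA]
  ring
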